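/- (Classical content of the character-code theorem.) Let q be a power of an odd prime, m ≥ 1, and for 0 ≤ r ≤ m let C_q(r, m) ⊆ F_q^{2^m} be the character code of order r. Then for 0 ≤ r_1 < r_2 ≤ m: (i) C_q(r_1, m) ⊆ C_q(r_2, m); (ii) dim_{F_q} C_q(r, m) = s_m(r) = Σ_{i=0}^r binom(m, i) for every 0 ≤ r ≤ m. -/

import Mathlib

open Finset

/-- The character code `C_q(r, m)`: functions `c : F_2^m → F_q` whose "Fourier
coefficient" at every `y ∈ F_2^m` of Hamming weight greater than `r` vanishes. -/
def charCode (F : Type*) [Field F] (r m : ℕ) : Submodule F ((Fin m → ZMod 2) → F) where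
  carrier := {c | ∀ y : Fin m → ZMod 2, r < hammingNorm y →
    ∑ x : Fin m → ZMod 2, c x * (-1 : F) ^ (∑ i, (x i).val * (y i).val) = 0}
  zero_mem' := by intro y hy; simp
  add_mem' := by
    intro a b ha hb y hy
    simp only [Set.mem_setOf_eq] at *
    simp only [Pi.add_apply, add_mul, Finset.sum_add_distrib, ha y hy, hb y hy, add_zero]
  smul_mem' := by
    intro g a ha y hy
    simp only [Set.mem_setOf_eq] at *
    simp only [Pi.smul_apply, smul_eq_mul, mul_assoc, ← Finset.mul_sum, ha y hy, mul_zero]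

section CharAux

variable {F : Type*} [Field F]

/-- The character `χ_y(x) = (-1)^{x·y}`. -/
def chi (F : Type*) [Field F] {m : ℕ} (x y : Fin m → ZMod 2) : F :=
  (-1) ^ (∑ i, (x i).val * (y i).val)

lemma chi_eq_prod {m : ℕ} (x y : Fin m → ZMod 2) :
    chi F x y = ∏ i, (-1 : F) ^ ((x i).val * (y i).val) := by
  rw [chi, Finset.prod_pow_eq_pow_sum]

lemma chi_comm {m : ℕ} (x y : Fin m → ZMod 2) : chi F x y = chi F y x := by
  simp [chi, mul_comm]

lemma zmod2_sum (g : ZMod 2 → F) : ∑ a : ZMod 2, g a = g 0 + g 1 := by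
  rw [show (univ : Finset (ZMod 2)) = {0, 1} from by decide]
  simp

lemma sum_chi {m : ℕ} (y : Fin m → ZMod 2) :
    ∑ x : Fin m → ZMod 2, chi F x y = if y = 0 then (2 ^ m : F) else 0 := by
  simp_rw [chi_eq_prod]
  have hps := Finset.prod_univ_sum (fun _ : Fin m => (univ : Finset (ZMod 2)))
    (fun i a => (-1 : F) ^ (a.val * (y i).val))
  rw [Fintype.piFinset_univ] at hps
  rw [← hps]
  by_cases hy : y = 0
  · subst hy
    simp
  · rw [if_neg hy]
    obtain ⟨i, hi⟩ : ∃ i, y i ≠ 0 := by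
      by_contra h
      push_neg at h
      exact hy (funext h)
    apply Finset.prod_eq_zero (Finset.mem_univ i)
    have h1 : y i = 1 := by
      have : ∀ a : ZMod 2, a ≠ 0 → a = 1 := by decide
      exact this _ hi
    rw [zmod2_sum, h1]
    norm_num [ZMod.val_one]

lemma neg_one_pow_mul_add (a b c : ZMod 2) :
    (-1 : F) ^ (a.val * b.val) * (-1) ^ (a.val * c.val) = (-1) ^ (a.val * (b + c).val) := by
  have h : ∀ z : ZMod 2, z = 0 ∨ z = 1 := by decide
  rcases h a with ha | ha <;> rcases h b with hb | hb <;> rcases h c with hc | hc <;>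
    subst ha <;> subst hb <;> subst hc <;>
    simp only [zero_add, add_zero, show ZMod.val (0 : ZMod 2) = 0 from by decide,
      show ZMod.val (1 : ZMod 2) = 1 from by decide,
      show ZMod.val ((1 : ZMod 2) + 1) = 0 from by decide,
      show ZMod.val (2 : ZMod 2) = 0 from by decide] <;> norm_num

lemma chi_mul {m : ℕ} (x y y' : Fin m → ZMod 2) :
    chi F x y * chi F x y' = chi F x (y + y') := by
  simp_rw [chi_eq_prod, ← Finset.prod_mul_distrib, Pi.add_apply]
  exact Finset.prod_congr rfl fun i _ => neg_one_pow_mul_add _ _ _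

lemma sum_chi_mul {m : ℕ} (y y' : Fin m → ZMod 2) :
    ∑ x : Fin m → ZMod 2, chi F x y * chi F x y' = if y = y' then (2 ^ m : F) else 0 := by
  simp_rw [chi_mul]
  rw [sum_chi]
  congr 1
  have key : ∀ a b : ZMod 2, a + b = 0 ↔ a = b := by decide
  simp only [funext_iff, Pi.add_apply, Pi.zero_apply, key]

lemma mem_charCode {r m : ℕ} {c : (Fin m → ZMod 2) → F} :
    c ∈ charCode F r m ↔ ∀ y : Fin m → ZMod 2, r < hammingNorm y →
      ∑ x : Fin m → ZMod 2, c x * chi F x y = 0 := Iff.rfl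

lemma chi_mem_charCode {r m : ℕ} (y₀ : Fin m → ZMod 2) (hy₀ : hammingNorm y₀ ≤ r) :
    (fun x => chi F x y₀) ∈ charCode F r m := by
  rw [mem_charCode]
  intro y hy
  rw [sum_chi_mul, if_neg]
  rintro rfl
  omega

lemma charCode_eq_span (h2 : (2 : F) ≠ 0) (r m : ℕ) :
    charCode F r m = Submodule.span F (Set.range
      (fun y : {y : Fin m → ZMod 2 // hammingNorm y ≤ r} => fun x => chi F x y.1)) := by
  apply le_antisymm
  · intro c hc
    have hne : (2 ^ m : F) ≠ 0 := pow_ne_zero _ h2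
    have key : c = (2 ^ m : F)⁻¹ • ∑ y ∈ univ.filter (fun y => hammingNorm y ≤ r),
        (∑ x, c x * chi F x y) • (fun x => chi F x y) := by
      rw [eq_inv_smul_iff₀ hne]
      funext x
      have hext : ∑ y ∈ univ.filter (fun y : Fin m → ZMod 2 => hammingNorm y ≤ r),
          (∑ x', c x' * chi F x' y) * chi F x y
          = ∑ y : Fin m → ZMod 2, (∑ x', c x' * chi F x' y) * chi F x y := by
        apply Finset.sum_subset (Finset.subset_univ _)
        intro y _ hy
        have hy' : r < hammingNorm y := by
          by_contra h
          exact hy (Finset.mem_filter.mpr ⟨Finset.mem_univ _, not_lt.mp h⟩)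
        rw [mem_charCode.mp hc y hy', zero_mul]
      have hfin : ∑ y : Fin m → ZMod 2, (∑ x', c x' * chi F x' y) * chi F x y
          = (2 ^ m : F) * c x := by
        simp_rw [Finset.sum_mul, mul_assoc]
        rw [Finset.sum_comm]
        simp_rw [← Finset.mul_sum]
        have : ∀ x' : Fin m → ZMod 2, ∑ y : Fin m → ZMod 2, chi F x' y * chi F x y
            = if x' = x then (2 ^ m : F) else 0 := by
          intro x'
          rw [Finset.sum_congr rfl fun y _ => by rw [chi_comm x' y, chi_comm x y]]
          exact sum_chi_mul x' x
        simp_rw [this, mul_ite, mul_zero]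
        rw [Finset.sum_ite_eq' univ x (fun x' => c x' * (2 ^ m : F))]
        simp [mul_comm]
      simp only [Pi.smul_apply, Finset.sum_apply, smul_eq_mul]
      rw [hext, hfin]
    rw [key]
    refine Submodule.smul_mem _ _ (Submodule.sum_mem _ fun y hy => Submodule.smul_mem _ _ ?_)
    exact Submodule.subset_span ⟨⟨y, (Finset.mem_filter.mp hy).2⟩, rfl⟩
  · rw [Submodule.span_le]
    rintro _ ⟨y, rfl⟩
    exact chi_mem_charCode y.1 y.2

lemma chi_linearIndependent (h2 : (2 : F) ≠ 0) (r m : ℕ) :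
    LinearIndependent F
      (fun y : {y : Fin m → ZMod 2 // hammingNorm y ≤ r} => fun x => chi F x y.1) := by
  rw [linearIndependent_iff']
  intro s g hsum y₀ hy₀
  have h0 : ∀ x, (∑ y ∈ s, g y * chi F x y.1) = 0 := by
    intro x
    have := congrFun hsum x
    simpa using this
  have hz : ∑ x : Fin m → ZMod 2, (∑ y ∈ s, g y * chi F x y.1) * chi F x y₀.1 = 0 := by
    simp [h0]
  have hz' : ∑ y ∈ s, ∑ x : Fin m → ZMod 2, g y * (chi F x y.1 * chi F x y₀.1) = 0 := by
    rw [Finset.sum_comm]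
    simpa [Finset.sum_mul, mul_assoc] using hz
  simp_rw [← Finset.mul_sum, sum_chi_mul, Subtype.val_inj, mul_ite, mul_zero] at hz'
  rw [Finset.sum_ite_eq' s y₀ (fun y => g y * (2 ^ m : F)), if_pos hy₀] at hz'
  rcases mul_eq_zero.mp hz' with h | h
  · exact h
  · exact absurd h (pow_ne_zero _ h2)

lemma hammingNorm_eq_card_filter {m : ℕ} (y : Fin m → ZMod 2) :
    hammingNorm y = (univ.filter fun j => y j ≠ 0).card := rfl

lemma card_hammingNorm_eq (m i : ℕ) :
    (univ.filter fun y : Fin m → ZMod 2 => hammingNorm y = i).card = m.choose i := by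
  have hrhs : m.choose i = (Finset.powersetCard i (univ : Finset (Fin m))).card := by
    rw [Finset.card_powersetCard, Finset.card_univ, Fintype.card_fin]
  rw [hrhs]
  have hone : ∀ a : ZMod 2, a ≠ 0 → a = 1 := by decide
  apply Finset.card_bij' (i := fun y _ => univ.filter fun j => y j ≠ 0)
    (j := fun s _ => fun j => if j ∈ s then 1 else 0)
  · intro y hy
    funext j
    by_cases h : y j = 0
    · simp [h]
    · simp [h, hone _ h]
  · intro s hs
    ext j
    by_cases h : j ∈ s <;> simp [h]
  · intro y hy
    rw [Finset.mem_powersetCard]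
    refine ⟨Finset.subset_univ _, ?_⟩
    rw [← hammingNorm_eq_card_filter]
    exact (Finset.mem_filter.mp hy).2
  · intro s hs
    rw [Finset.mem_powersetCard] at hs
    rw [Finset.mem_filter]
    refine ⟨Finset.mem_univ _, ?_⟩
    rw [hammingNorm_eq_card_filter]
    rw [show (univ.filter fun j => (if j ∈ s then (1 : ZMod 2) else 0) ≠ 0) = s from by
      ext j; by_cases h : j ∈ s <;> simp [h]]
    exact hs.2

lemma card_wt_le (m r : ℕ) :
    Fintype.card {y : Fin m → ZMod 2 // hammingNorm y ≤ r}
      = ∑ i ∈ Finset.range (r + 1), m.choose i := by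
  rw [Fintype.card_subtype]
  rw [Finset.card_eq_sum_card_fiberwise (f := hammingNorm) (t := Finset.range (r + 1))
    (fun y hy => by
      rw [Finset.mem_coe, Finset.mem_filter] at hy
      rw [Finset.mem_coe, Finset.mem_range]
      omega)]
  apply Finset.sum_congr rfl
  intro i hi
  rw [Finset.mem_range] at hi
  rw [Finset.filter_filter]
  rw [show (univ.filter fun y : Fin m → ZMod 2 => hammingNorm y ≤ r ∧ hammingNorm y = i)
      = univ.filter fun y => hammingNorm y = i from by
    apply Finset.filter_congr
    intro y _
    constructor
    · exact fun h => h.2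
    · exact fun h => ⟨by omega, h⟩]
  exact card_hammingNorm_eq m i

end CharAux

/-- over a finite field of odd characteristic, the character codes are
nested, `C_q(r₁, m) ⊆ C_q(r₂, m)` for `r₁ < r₂`, and `C_q(r, m)` has dimension
`s_m(r) = ∑_{i=0}^r binom(m, i)`. -/
theorem charCode_data {F : Type*} [Field F] [Fintype F] (hodd : ringChar F ≠ 2)
    (m : ℕ) (hm : 1 ≤ m) (r₁ r₂ : ℕ) (h1 : r₁ < r₂) (h2 : r₂ ≤ m) :
    charCode F r₁ m ≤ charCode F r₂ m ∧
    ∀ r : ℕ, r ≤ m →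
      Module.finrank F (charCode F r m) = ∑ i ∈ Finset.range (r + 1), m.choose i := by
  have h2F : (2 : F) ≠ 0 := by
    intro h
    have hd : ringChar F ∣ 2 := (ringChar.spec F 2).mp (by exact_mod_cast h)
    rcases Nat.prime_two.eq_one_or_self_of_dvd _ hd with h1' | h2'
    · have : ((1 : ℕ) : F) = 0 := (ringChar.spec F 1).mpr (h1' ▸ dvd_refl _)
      simp at this
    · exact hodd h2'
  constructor
  · intro c hc y hy
    exact hc y (h1.trans hy)
  · intro r hr
    rw [charCode_eq_span h2F r m, finrank_span_eq_card (chi_linearIndependent h2F r m),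
      card_wt_le]
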